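/- Let Δt > 0 and let θ : [0, Δt] → ℝ be a C² function with θ''(t) < 0 for all t, θ(0) = 0, θ(Δt) = θ_q where θ_q ∈ (0, π/2], and θ(t) ∈ [0, θ_q] for all t ∈ [0, Δt]. Then ∫₀^{Δt} sin θ(t) dt > Δt·(1 − cos θ_q)/θ_q. -/

import Mathlib

open Real Set intervalIntegral

/-- For a C² angle function `θ` on `[0, Δt]` with `θ'' < 0`,
`θ(0) = 0`, `θ(Δt) = θ_q ∈ (0, π/2]` and `θ` taking values in `[0, θ_q]`,
the total rise satisfies `∫₀^Δt sin θ(t) dt > Δt (1 - cos θ_q)/θ_q`. -/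
theorem rise_lower_bound
    (Δt θq : ℝ) (hΔt : 0 < Δt) (θ θ' θ'' : ℝ → ℝ)
    (hd1 : ∀ t ∈ Set.Icc 0 Δt, HasDerivWithinAt θ (θ' t) (Set.Icc 0 Δt) t)
    (hd2 : ∀ t ∈ Set.Icc 0 Δt, HasDerivWithinAt θ' (θ'' t) (Set.Icc 0 Δt) t)
    (hcont : ContinuousOn θ'' (Set.Icc 0 Δt))
    (hconc : ∀ t ∈ Set.Icc 0 Δt, θ'' t < 0)
    (h0 : θ 0 = 0) (hq : θ Δt = θq) (hθq : 0 < θq ∧ θq ≤ π / 2)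
    (hrange : ∀ t ∈ Set.Icc 0 Δt, θ t ∈ Set.Icc 0 θq) :
    (∫ t in (0 : ℝ)..Δt, Real.sin (θ t)) > Δt * (1 - Real.cos θq) / θq := by
  obtain ⟨hθq0, hθqπ⟩ := hθq
  have hIoo : interior (Set.Icc (0:ℝ) Δt) = Set.Ioo 0 Δt := interior_Icc
  -- second derivative identification on the interior
  have hderiv2 : ∀ x ∈ interior (Set.Icc (0:ℝ) Δt), deriv^[2] θ x < 0 := by
    intro x hx
    rw [hIoo] at hx
    have hmem : Set.Icc (0:ℝ) Δt ∈ nhds x :=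
      Icc_mem_nhds hx.1 hx.2
    have hopen : Set.Ioo (0:ℝ) Δt ∈ nhds x := isOpen_Ioo.mem_nhds hx
    have heq : deriv θ =ᶠ[nhds x] θ' := by
      filter_upwards [hopen] with y hy
      exact ((hd1 y (Set.Ioo_subset_Icc_self hy)).hasDerivAt
        (Icc_mem_nhds hy.1 hy.2)).deriv
    have : deriv (deriv θ) x = θ'' x := by
      rw [Filter.EventuallyEq.deriv_eq heq]
      exact ((hd2 x (Set.Ioo_subset_Icc_self hx)).hasDerivAt hmem).deriv
    simpa [Function.iterate_succ, this] using hconc x (Set.Ioo_subset_Icc_self hx)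
  have hθcont : ContinuousOn θ (Set.Icc 0 Δt) :=
    fun t ht => (hd1 t ht).continuousWithinAt
  have hsc : StrictConcaveOn ℝ (Set.Icc 0 Δt) θ :=
    strictConcaveOn_of_deriv2_neg (convex_Icc 0 Δt) hθcont hderiv2
  -- chord bound: θ t > t * θq / Δt on the open interval
  have hchord : ∀ t ∈ Set.Ioo (0:ℝ) Δt, t * θq / Δt < θ t := by
    intro t ht
    have ha : 0 < (Δt - t) / Δt := div_pos (by linarith [ht.2]) hΔt
    have hb : 0 < t / Δt := div_pos ht.1 hΔt
    have hab : (Δt - t) / Δt + t / Δt = 1 := by field_simp; ring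
    have := hsc.2 (Set.left_mem_Icc.2 hΔt.le) (Set.right_mem_Icc.2 hΔt.le)
      (by linarith [ht.2] : (0:ℝ) ≠ Δt) ha hb hab
    have harg : ((Δt - t) / Δt) • (0:ℝ) + (t / Δt) • Δt = t := by
      rw [smul_zero, zero_add, smul_eq_mul, div_mul_cancel₀ _ hΔt.ne']
    rw [harg, h0, hq] at this
    calc t * θq / Δt = (Δt - t) / Δt * 0 + t / Δt * θq := by ring
    _ < θ t := this
  -- lower comparison function
  set g : ℝ → ℝ := fun t => Real.sin (t * θq / Δt) with hg
  have hgcont : ContinuousOn g (Set.Icc 0 Δt) := by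
    apply Real.continuous_sin.comp_continuousOn
    fun_prop
  have hsθcont : ContinuousOn (fun t => Real.sin (θ t)) (Set.Icc 0 Δt) :=
    Real.continuous_sin.comp_continuousOn hθcont
  -- pointwise comparison on Ioc
  have hle : ∀ t ∈ Set.Ioc (0:ℝ) Δt, g t ≤ Real.sin (θ t) := by
    intro t ht
    rcases eq_or_lt_of_le ht.2 with rfl | htlt
    · simp only [hg, hq]
      rw [mul_comm, mul_div_assoc, div_self hΔt.ne', mul_one]
    · have ht' : t ∈ Set.Ioo (0:ℝ) Δt := ⟨ht.1, htlt⟩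
      have hθt := hrange t (Set.Ioo_subset_Icc_self ht')
      have h1 : t * θq / Δt ∈ Set.Icc (-(π/2)) (π/2) := by
        constructor
        · have : 0 ≤ t * θq / Δt :=
            div_nonneg (mul_nonneg ht'.1.le hθq0.le) hΔt.le
          linarith [Real.pi_pos]
        · have : t * θq / Δt < θ t := hchord t ht'
          linarith [hθt.2]
      have h2 : θ t ∈ Set.Icc (-(π/2)) (π/2) := by
        constructor
        · linarith [hθt.1, Real.pi_pos]
        · linarith [hθt.2]
      exact (Real.strictMonoOn_sin h1 h2 (hchord t ht')).le
  have hlt : ∃ c ∈ Set.Icc (0:ℝ) Δt, g c < Real.sin (θ c) := by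
    refine ⟨Δt/2, ⟨by linarith, by linarith⟩, ?_⟩
    have hc : Δt/2 ∈ Set.Ioo (0:ℝ) Δt := ⟨by linarith, by linarith⟩
    have hθt := hrange _ (Set.Ioo_subset_Icc_self hc)
    have h1 : (Δt/2) * θq / Δt ∈ Set.Icc (-(π/2)) (π/2) := by
      constructor
      · have : 0 ≤ (Δt/2) * θq / Δt :=
          div_nonneg (mul_nonneg (by linarith) hθq0.le) hΔt.le
        linarith [Real.pi_pos]
      · have : (Δt/2) * θq / Δt < θ (Δt/2) := hchord _ hc
        linarith [hθt.2]
    have h2 : θ (Δt/2) ∈ Set.Icc (-(π/2)) (π/2) := by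
      constructor
      · linarith [hθt.1, Real.pi_pos]
      · linarith [hθt.2]
    exact Real.strictMonoOn_sin h1 h2 (hchord _ hc)
  have hint : (∫ t in (0:ℝ)..Δt, g t) < ∫ t in (0:ℝ)..Δt, Real.sin (θ t) :=
    intervalIntegral.integral_lt_integral_of_continuousOn_of_le_of_exists_lt
      hΔt hgcont hsθcont hle hlt
  -- compute ∫ g
  have hgval : (∫ t in (0:ℝ)..Δt, g t) = Δt * (1 - Real.cos θq) / θq := by
    have hF : ∀ t ∈ Set.uIcc (0:ℝ) Δt,
        HasDerivAt (fun s => -(Δt/θq) * Real.cos (s * θq / Δt)) (g t) t := by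
      intro t _
      have h1 : HasDerivAt (fun s : ℝ => s * θq / Δt) (θq / Δt) t := by
        simpa using ((hasDerivAt_id t).mul_const θq).div_const Δt
      have h2 := (Real.hasDerivAt_cos (t * θq / Δt)).comp t h1
      have h3 := h2.const_mul (-(Δt/θq))
      refine h3.congr_deriv ?_
      field_simp [hg]
      simp only [hg]; ring_nf
    have hgc : IntervalIntegrable g MeasureTheory.volume 0 Δt :=
      (hgcont.mono (by rw [Set.uIcc_of_le hΔt.le])).intervalIntegrable
    rw [intervalIntegral.integral_eq_sub_of_hasDerivAt hF hgc]
    have : Δt * θq / Δt = θq := by field_simp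
    simp only [this, zero_mul, zero_div, Real.cos_zero]
    field_simp
    ring
  rw [← hgval]
  exact hint
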